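/- For β > β_c, for every ε > 0 there exists N ∈ ℕ such that for all n, m > N and all L with 1 ≤ L ≤ min{n,m}, ∑_{l=0}^{L−1} |μ_{β,n}(B_{n−l}) − μ_{β,m}(B_{m−l})| < ε. In fact this sum is bounded above by (2(K_1+2)/G_1²) K_1 e^{−(βα−h)m} where K_1 = 1/(1−e^{−(βα−h)}) and G_1 = inf_{k∈ℕ}(K_1 − K_1 e^{−(βα−h)k} + 2e^{−βαk}) > 0 (assuming n > m). -/

import Mathlib

open MeasureTheory Set Real Filter Pointwise

noncomputable def cantorStage : ℕ → Set ℝ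
  | 0 => Set.Icc 0 1
  | (m+1) => (fun x => x / 3) '' cantorStage m ∪ (fun x => (x + 2) / 3) '' cantorStage m

noncomputable def Bset (m : ℕ) : Set ℝ := cantorStage (m - 1) \ cantorStage m

lemma cantorStage_subset_unit : ∀ m, cantorStage m ⊆ Set.Icc 0 1 := by
  intro m
  induction m with
  | zero => exact subset_rfl
  | succ m ih =>
    rintro x (⟨y, hy, rfl⟩ | ⟨y, hy, rfl⟩) <;>
      · have := ih hy
        simp only [Set.mem_Icc] at this ⊢
        constructor <;> nlinarith [this.1, this.2]

lemma cantorStage_succ_subset (m : ℕ) : cantorStage (m+1) ⊆ cantorStage m := by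
  induction m with
  | zero =>
    rintro x (⟨y, hy, rfl⟩ | ⟨y, hy, rfl⟩) <;>
      · have := cantorStage_subset_unit 0 hy
        simp only [Set.mem_Icc] at this ⊢
        constructor <;> nlinarith [this.1, this.2]
  | succ m ih =>
    show cantorStage (m+2) ⊆ cantorStage (m+1)
    rintro x (⟨y, hy, rfl⟩ | ⟨y, hy, rfl⟩)
    · exact Or.inl ⟨y, ih hy, rfl⟩
    · exact Or.inr ⟨y, ih hy, rfl⟩

lemma cantorStage_anti : ∀ {j k : ℕ}, j ≤ k → cantorStage k ⊆ cantorStage j := by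
  intro j k h
  induction h with
  | refl => exact subset_rfl
  | step h ih => exact fun x hx => ih (cantorStage_succ_subset _ hx)

lemma cantorStage_compact (m : ℕ) : IsCompact (cantorStage m) := by
  induction m with
  | zero => exact isCompact_Icc
  | succ m ih =>
    exact (ih.image (by continuity)).union (ih.image (by continuity))

lemma cantorStage_meas (m : ℕ) : MeasurableSet (cantorStage m) :=
  (cantorStage_compact m).isClosed.measurableSet

lemma cantorStage_vol (m : ℕ) : volume (cantorStage m) = ENNReal.ofReal ((2/3)^m) := by
  induction m with
  | zero => simp [cantorStage, Real.volume_Icc]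
  | succ m ih =>
    have h1 : (fun x : ℝ => x / 3) '' cantorStage m = (3⁻¹ : ℝ) • cantorStage m := by
      rw [← Set.image_smul]
      congr 1; funext x; simp [div_eq_inv_mul, smul_eq_mul]
    have h2 : (fun x : ℝ => (x + 2) / 3) '' cantorStage m
        = (3⁻¹ : ℝ) • ((fun x : ℝ => x + 2) '' cantorStage m) := by
      rw [← Set.image_smul, Set.image_image]
      congr 1; funext x; simp [div_eq_inv_mul, smul_eq_mul]
    have v1 : volume ((fun x : ℝ => x / 3) '' cantorStage m)
        = ENNReal.ofReal (3⁻¹) * volume (cantorStage m) := by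
      rw [h1, Measure.addHaar_smul_of_nonneg volume (by norm_num : (0:ℝ) ≤ 3⁻¹)]
      simp
    have v2 : volume ((fun x : ℝ => (x + 2) / 3) '' cantorStage m)
        = ENNReal.ofReal (3⁻¹) * volume (cantorStage m) := by
      rw [h2, Measure.addHaar_smul_of_nonneg volume (by norm_num : (0:ℝ) ≤ 3⁻¹)]
      rw [Set.image_add_right, measure_preimage_add_right]
      simp
    have hdisj : Disjoint ((fun x : ℝ => x / 3) '' cantorStage m)
        ((fun x : ℝ => (x + 2) / 3) '' cantorStage m) := by
      apply Set.disjoint_left.2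
      rintro x ⟨y, hy, rfl⟩ ⟨z, hz, hzx⟩
      have hy' := cantorStage_subset_unit m hy
      have hz' := cantorStage_subset_unit m hz
      simp only [Set.mem_Icc] at hy' hz'
      nlinarith [hy'.2, hz'.1]
    have hmeas : MeasurableSet ((fun x : ℝ => (x + 2) / 3) '' cantorStage m) := by
      have : IsCompact ((fun x : ℝ => (x + 2) / 3) '' cantorStage m) :=
        (cantorStage_compact m).image (by continuity)
      exact this.isClosed.measurableSet
    show volume ((fun x : ℝ => x / 3) '' cantorStage m ∪ _) = _
    rw [measure_union hdisj hmeas, v1, v2, ih, ← ENNReal.ofReal_mul (by norm_num),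
      ← ENNReal.ofReal_add (by positivity) (by positivity)]
    congr 1; ring
noncomputable def psi (A : ℕ → ℝ) (n : ℕ) (x : ℝ) : ℝ :=
  -∑ k ∈ Finset.Icc 1 n, A k * (Bset k).indicator (fun _ => (1:ℝ)) x

noncomputable def hc : ℝ := Real.log (3/2)

noncomputable def psiα (α : ℝ) : ℕ → ℝ → ℝ := psi (fun k => α * k)

noncomputable def Zf (α β : ℝ) (n : ℕ) : ℝ :=
  ∫ x in Set.Icc (0:ℝ) 1, Real.exp (-β * psiα α n x)

noncomputable def gibbs (α β : ℝ) (n : ℕ) (A : Set ℝ) : ℝ :=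
  (∫ x in A ∩ Set.Icc (0:ℝ) 1, Real.exp (-β * psiα α n x)) / Zf α β n

lemma Bset_subset_unit (k : ℕ) : Bset k ⊆ Set.Icc 0 1 :=
  fun x hx => cantorStage_subset_unit _ hx.1

lemma Bset_meas (k : ℕ) : MeasurableSet (Bset k) :=
  (cantorStage_meas _).diff (cantorStage_meas _)

lemma Bset_vol (k : ℕ) (hk : 1 ≤ k) :
    volume (Bset k) = ENNReal.ofReal (1/2 * (2/3)^k) := by
  obtain ⟨j, rfl⟩ := Nat.exists_eq_add_of_le hk
  have hsub : cantorStage (1 + j) ⊆ cantorStage (1 + j - 1) :=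
    cantorStage_anti (Nat.sub_le _ _)
  rw [Bset, measure_diff hsub (cantorStage_meas _).nullMeasurableSet
    (ne_of_lt (lt_of_le_of_lt (measure_mono (cantorStage_subset_unit _))
      (by simp [Real.volume_Icc]))),
    cantorStage_vol, cantorStage_vol]
  have h1 : 1 + j - 1 = j := by omega
  rw [h1, ← ENNReal.ofReal_sub _ (by positivity)]
  congr 1
  rw [pow_add]
  ring

lemma Bset_unique {x : ℝ} {j k : ℕ} (hj : 1 ≤ j) (hk : 1 ≤ k)
    (hxj : x ∈ Bset j) (hxk : x ∈ Bset k) : j = k := by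
  by_contra hne
  rcases Nat.lt_or_ge j k with h | h
  · exact hxj.2 (cantorStage_anti (by omega : j ≤ k - 1) hxk.1)
  · have : j ≠ k := hne
    have hkj : k < j := by omega
    exact hxk.2 (cantorStage_anti (by omega : k ≤ j - 1) hxj.1)

lemma psi_eq_of_mem {x : ℝ} {k n : ℕ} (hk1 : 1 ≤ k) (hkn : k ≤ n)
    (hx : x ∈ Bset k) (A : ℕ → ℝ) : psi A n x = -A k := by
  rw [psi, neg_inj]
  rw [Finset.sum_eq_single_of_mem k (Finset.mem_Icc.2 ⟨hk1, hkn⟩)]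
  · simp [Set.indicator_of_mem hx]
  · intro j hj hne
    have hj1 : 1 ≤ j := (Finset.mem_Icc.1 hj).1
    have : x ∉ Bset j := fun hxj => hne (Bset_unique hj1 hk1 hxj hx)
    simp [Set.indicator_of_notMem this]

lemma psi_eq_zero {x : ℝ} {n : ℕ} (hx : ∀ k, 1 ≤ k → k ≤ n → x ∉ Bset k)
    (A : ℕ → ℝ) : psi A n x = 0 := by
  rw [psi, neg_eq_zero]
  apply Finset.sum_eq_zero
  intro j hj
  rw [Finset.mem_Icc] at hj
  simp [Set.indicator_of_notMem (hx j hj.1 hj.2)]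

lemma integrand_eq (α β : ℝ) (n : ℕ) (x : ℝ) :
    Real.exp (-β * psiα α n x)
      = 1 + ∑ k ∈ Finset.Icc 1 n,
          (Bset k).indicator (fun _ => Real.exp (β*α*k) - 1) x := by
  by_cases h : ∃ k, 1 ≤ k ∧ k ≤ n ∧ x ∈ Bset k
  · obtain ⟨k, hk1, hkn, hx⟩ := h
    rw [psiα, psi_eq_of_mem hk1 hkn hx]
    rw [Finset.sum_eq_single_of_mem k (Finset.mem_Icc.2 ⟨hk1, hkn⟩)]
    · rw [Set.indicator_of_mem hx]
      ring_nf
    · intro j hj hne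
      have hj1 : 1 ≤ j := (Finset.mem_Icc.1 hj).1
      have : x ∉ Bset j := fun hxj => hne (Bset_unique hj1 hk1 hxj hx)
      simp [Set.indicator_of_notMem this]
  · push_neg at h
    rw [psiα, psi_eq_zero (fun k h1 h2 => h k h1 h2)]
    rw [Finset.sum_eq_zero]
    · simp
    · intro j hj
      rw [Finset.mem_Icc] at hj
      simp [Set.indicator_of_notMem (h j hj.1 hj.2)]

lemma Zf_eq (α β : ℝ) (n : ℕ) :
    Zf α β n = 1 + ∑ k ∈ Finset.Icc 1 n,
      (Real.exp (β*α*k) - 1) * (1/2 * (2/3)^k) := by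
  have hfin : volume (Set.Icc (0:ℝ) 1) < ⊤ := by
    simp [Real.volume_Icc]
  rw [Zf]
  rw [MeasureTheory.setIntegral_congr_fun measurableSet_Icc
    (fun x _ => integrand_eq α β n x)]
  rw [MeasureTheory.integral_add]
  · rw [MeasureTheory.setIntegral_const, MeasureTheory.integral_finset_sum]
    · have : ∀ k ∈ Finset.Icc 1 n,
          (∫ x in Set.Icc (0:ℝ) 1,
            (Bset k).indicator (fun _ => Real.exp (β*α*k) - 1) x)
          = (Real.exp (β*α*k) - 1) * (1/2 * (2/3)^k) := by
        intro k hk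
        rw [Finset.mem_Icc] at hk
        rw [MeasureTheory.integral_indicator_const _ (Bset_meas k)]
        rw [measureReal_def, Measure.restrict_apply (Bset_meas k),
          Set.inter_eq_self_of_subset_left (Bset_subset_unit k),
          Bset_vol k hk.1, ENNReal.toReal_ofReal (by positivity)]
        rw [smul_eq_mul]; ring
      rw [Finset.sum_congr rfl this]
      simp [Real.volume_Icc]
    · intro k hk
      exact (integrable_const _).indicator (Bset_meas k)
  · exact MeasureTheory.integrableOn_const hfin.ne
  · apply MeasureTheory.integrable_finset_sum
    intro k hk
    exact (integrable_const _).indicator (Bset_meas k)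

lemma gibbs_eq (α β : ℝ) (n K : ℕ) (h1 : 1 ≤ K) (h2 : K ≤ n) :
    gibbs α β n (Bset K) = (1/2 * (2/3)^K * Real.exp (β*α*K)) / Zf α β n := by
  rw [gibbs, Set.inter_eq_self_of_subset_left (Bset_subset_unit K)]
  congr 1
  have hint : (∫ x in Bset K, Real.exp (-β * psiα α n x))
      = ∫ _x in Bset K, Real.exp (β*α*K) := by
    apply MeasureTheory.setIntegral_congr_fun (Bset_meas K)
    intro x hx
    show Real.exp (-β * psi (fun k => α * k) n x) = _
    rw [psi_eq_of_mem h1 h2 hx]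
    ring_nf
  rw [hint, MeasureTheory.setIntegral_const, measureReal_def, Bset_vol K h1,
    ENNReal.toReal_ofReal (by positivity), smul_eq_mul]

lemma hc_pos : 0 < hc := Real.log_pos (by norm_num)

lemma exp_neg_hc : Real.exp (-hc) = 2/3 := by
  rw [hc, Real.exp_neg, Real.exp_log (by norm_num)]
  norm_num

lemma alg_step (P q r K1 : ℝ) (n : ℕ) (hPq : P * q = 1) (hPr : P * r = 2/3)
    (hK : K1 * (1 - q) = 1) :
    P^(n+1) * ((K1 - K1*q^(n+1) + 2*r^(n+1))/2)
      = P^n * ((K1 - K1*q^n + 2*r^n)/2) + ((3/2*P)^(n+1) - 1) * (1/2 * (2/3)^(n+1)) := by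
  have hK' : K1 * (P - 1) = P := by linear_combination P * hK + K1 * hPq
  have e1 : P^(n+1) * q^(n+1) = 1 := by rw [← mul_pow, hPq, one_pow]
  have e2 : P^(n+1) * r^(n+1) = (2/3)^(n+1) := by rw [← mul_pow, hPr]
  have h1 : P^n * q^n = 1 := by rw [← mul_pow, hPq, one_pow]
  have e3 : P^n * r^n = (2/3)^n := by rw [← mul_pow, hPr]
  have e4 : (3/2*P)^(n+1) * (2/3)^(n+1) = P^(n+1) := by
    rw [← mul_pow, show (3/2*P)*(2/3) = P by ring]
  linear_combination (-(K1/2)) * e1 + e2 + (K1/2) * h1 - e3 - (1/2) * e4 + (P^n/2) * hK'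

section analysis

variable (α β : ℝ)

noncomputable def qv : ℝ := Real.exp (-(β*α - hc))
noncomputable def rv : ℝ := Real.exp (-(β*α))
noncomputable def K1v : ℝ := 1 / (1 - qv α β)

variable {α β}

lemma qv_pos : 0 < qv α β := Real.exp_pos _

lemma rv_pos : 0 < rv α β := Real.exp_pos _

lemma rv_le_qv (hβα : hc < β*α) : rv α β ≤ qv α β :=
  Real.exp_le_exp.2 (by nlinarith [hc_pos])

lemma qv_lt_one (hβα : hc < β*α) : qv α β < 1 := by
  rw [qv, Real.exp_lt_one_iff]; linarith

lemma K1_eq (hβα : hc < β*α) : K1v α β * (1 - qv α β) = 1 := by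
  rw [K1v]
  have h0 : (1:ℝ) - qv α β ≠ 0 := by
    have := qv_lt_one hβα
    intro h
    nlinarith
  exact one_div_mul_cancel h0

lemma K1_pos (hβα : hc < β*α) : 0 < K1v α β := by
  rw [K1v]
  exact div_pos one_pos (by linarith [qv_lt_one hβα])

lemma one_le_K1 (hβα : hc < β*α) : 1 ≤ K1v α β := by
  rw [K1v, le_div_iff₀ (by linarith [qv_lt_one hβα])]
  nlinarith [qv_pos (α := α) (β := β)]

lemma Zf_closed (hβα : hc < β*α) (n : ℕ) :
    Zf α β n = Real.exp (β*α - hc) ^ n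
      * ((K1v α β - K1v α β * (qv α β)^n + 2 * (rv α β)^n) / 2) := by
  set P := Real.exp (β*α - hc) with hP
  have hPq : P * qv α β = 1 := by rw [hP, qv, ← Real.exp_add]; simp
  have hPr : P * rv α β = 2/3 := by
    rw [hP, rv, ← Real.exp_add, show β*α - hc + -(β*α) = -hc by ring, exp_neg_hc]
  have hK := K1_eq hβα
  induction n with
  | zero =>
    rw [Zf_eq]
    simp
  | succ n ih =>
    have hrec : Zf α β (n+1) = Zf α β n
        + (Real.exp (β*α*(n+1)) - 1) * (1/2 * (2/3)^(n+1)) := by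
      rw [Zf_eq, Zf_eq, Finset.sum_Icc_succ_top (by omega : 1 ≤ n+1)]
      push_cast
      ring
    have hS : Real.exp (β*α*((n:ℝ)+1)) = (3/2*P)^(n+1) := by
      have h32 : (3:ℝ)/2 * P = Real.exp (β*α) := by
        rw [hP, show (3:ℝ)/2 = Real.exp hc from by rw [hc, Real.exp_log (by norm_num)],
          ← Real.exp_add]
        congr 1
        ring
      rw [h32, ← Real.exp_nat_mul]
      push_cast
      ring_nf
    rw [hrec, ih, show ((n:ℝ)+1) = ((n+1 : ℕ) : ℝ) by push_cast; ring] at *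
    rw [hS]
    exact (alg_step P (qv α β) (rv α β) (K1v α β) n hPq hPr hK).symm

lemma gibbs_formula (hβα : hc < β*α) {n l : ℕ} (hl : l < n) :
    gibbs α β n (Bset (n - l)) = (1/2) * (qv α β)^l
      / ((K1v α β - K1v α β * (qv α β)^n + 2 * (rv α β)^n) / 2) := by
  have h1 : 1 ≤ n - l := by omega
  have h2 : n - l ≤ n := Nat.sub_le n l
  rw [gibbs_eq α β n (n-l) h1 h2, Zf_closed hβα]
  set P := Real.exp (β*α - hc) with hP
  have hPq : P * qv α β = 1 := by rw [hP, qv, ← Real.exp_add]; simp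
  have hnum : (1:ℝ)/2 * (2/3)^(n-l) * Real.exp (β*α*((n-l : ℕ) : ℝ)) = 1/2 * P^(n-l) := by
    rw [show ((2:ℝ)/3) = Real.exp (-hc) from exp_neg_hc.symm, ← Real.exp_nat_mul,
      mul_assoc, ← Real.exp_add, hP, ← Real.exp_nat_mul]
    congr 2
    ring
  rw [hnum]
  set W := (K1v α β - K1v α β * (qv α β)^n + 2 * (rv α β)^n) / 2 with hW
  have hWpos : 0 < W := by
    rw [hW]
    have h1 : (qv α β)^n ≤ 1 := pow_le_one₀ qv_pos.le (qv_lt_one hβα).le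
    have h2 := K1_pos hβα
    have h3 : (0:ℝ) < (rv α β)^n := pow_pos rv_pos n
    nlinarith
  have hsplit : P^n = P^(n-l) * P^l := by
    rw [← pow_add]
    congr 1
    omega
  have hPl : P^l * (qv α β)^l = 1 := by rw [← mul_pow, hPq, one_pow]
  rw [hsplit, div_eq_div_iff (by positivity) (by positivity)]
  linear_combination (-(1/2) * P^(n-l) * W) * hPl

end analysis

theorem stmt13 (α β : ℝ) (hα : 0 < α) (hβc : hc / α < β) :
    let b : ℝ := β*α - hc
    let K1 : ℝ := 1 / (1 - Real.exp (-b))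
    let G1 : ℝ := ⨅ k : ℕ, (K1 - K1 * Real.exp (-b * k) + 2 * Real.exp (-(β*α) * k))
    (∀ ε > 0, ∃ N : ℕ, ∀ n m L : ℕ, N < n → N < m → 1 ≤ L → L ≤ min n m →
      ∑ l ∈ Finset.range L,
        |gibbs α β n (Bset (n - l)) - gibbs α β m (Bset (m - l))| < ε) ∧
    (∀ n m L : ℕ, m < n → 1 ≤ L → L ≤ m →
      ∑ l ∈ Finset.range L,
        |gibbs α β n (Bset (n - l)) - gibbs α β m (Bset (m - l))| ≤
        (2 * (K1 + 2) / G1 ^ 2) * K1 * Real.exp (-b * m)) := by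
  intro b K1 G1
  have hβα : hc < β*α := by
    rw [div_lt_iff₀ hα] at hβc
    linarith
  set q := qv α β with hqdef
  set r := rv α β with hrdef
  set K := K1v α β with hKdef
  have hqpos : 0 < q := qv_pos
  have hq1 : q < 1 := qv_lt_one hβα
  have hrpos : 0 < r := rv_pos
  have hrq : r ≤ q := rv_le_qv hβα
  have hKq : K * (1 - q) = 1 := K1_eq hβα
  have hK1le : (1:ℝ) ≤ K := one_le_K1 hβα
  have hK1 : K1 = K := rfl
  have hKval : K = 1/(1-q) := rfl
  have hexp : ∀ k : ℕ, Real.exp (-b*(k:ℝ)) = q^k := by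
    intro k
    show Real.exp (-(β*α - hc)*(k:ℝ)) = Real.exp (-(β*α - hc))^k
    rw [← Real.exp_nat_mul]
    congr 1
    ring
  have hrexp : ∀ k : ℕ, Real.exp (-(β*α)*(k:ℝ)) = r^k := by
    intro k
    show Real.exp (-(β*α)*(k:ℝ)) = Real.exp (-(β*α))^k
    rw [← Real.exp_nat_mul]
    congr 1
    ring
  have hbody : ∀ k : ℕ, K1 - K1*Real.exp (-b*(k:ℝ)) + 2*Real.exp (-(β*α)*(k:ℝ))
      = K - K*q^k + 2*r^k := by
    intro k
    rw [hexp, hrexp, hK1]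
  have hF1 : ∀ k : ℕ, (1:ℝ) ≤ K - K*q^k + 2*r^k := by
    intro k
    cases k with
    | zero => simp
    | succ k =>
      have h1 : q^(k+1) ≤ q := pow_le_of_le_one hqpos.le hq1.le (by omega)
      have h2 : 0 < r^(k+1) := pow_pos hrpos _
      nlinarith
  have hG1 : G1 = ⨅ k : ℕ, (K - K*q^k + 2*r^k) := iInf_congr hbody
  have hG1ge : (1:ℝ) ≤ G1 := by
    rw [hG1]
    exact le_ciInf hF1
  have hG1le : ∀ k : ℕ, G1 ≤ K - K*q^k + 2*r^k := by
    intro k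
    rw [hG1]
    exact ciInf_le ⟨1, by rintro x ⟨j, rfl⟩; exact hF1 j⟩ k
  have hG1pos : (0:ℝ) < G1 := by linarith
  have hg : ∀ {n l : ℕ}, l < n →
      gibbs α β n (Bset (n - l)) = q^l / (K - K*q^n + 2*r^n) := by
    intro n l h
    rw [gibbs_formula hβα h, ← hqdef, ← hrdef, ← hKdef]
    have h0 : K - K*q^n + 2*r^n ≠ 0 := by linarith [hF1 n]
    field_simp
  have hgeom : ∀ L : ℕ, ∑ l ∈ Finset.range L, q^l ≤ K := by
    intro L
    rw [geom_sum_eq (ne_of_lt hq1) L]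
    have hne1 : q - 1 ≠ 0 := by intro h; nlinarith
    have hne2 : (1:ℝ) - q ≠ 0 := by intro h; nlinarith
    have heq : (q^L - 1)/(q - 1) = (1 - q^L)/(1 - q) := by
      rw [div_eq_div_iff hne1 hne2]
      ring
    rw [heq, hKval]
    apply div_le_div₀ zero_le_one (by nlinarith [pow_nonneg hqpos.le L]) (by linarith) le_rfl
  -- main bound
  have main : ∀ n m L : ℕ, m < n → 1 ≤ L → L ≤ m →
      ∑ l ∈ Finset.range L,
        |gibbs α β n (Bset (n - l)) - gibbs α β m (Bset (m - l))| ≤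
        2*(K1+2)/G1^2*K1*q^m := by
    intro n m L hmn hL1 hLm
    have hFn1 : (1:ℝ) ≤ K - K*q^n + 2*r^n := hF1 n
    have hFm1 : (1:ℝ) ≤ K - K*q^m + 2*r^m := hF1 m
    have hFn0 : K - K*q^n + 2*r^n ≠ 0 := by linarith
    have hFm0 : K - K*q^m + 2*r^m ≠ 0 := by linarith
    have hGFn : G1 ≤ K - K*q^n + 2*r^n := hG1le n
    have hGFm : G1 ≤ K - K*q^m + 2*r^m := hG1le m
    have hqnm : q^n ≤ q^m := pow_le_pow_of_le_one hqpos.le hq1.le hmn.le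
    have hrnm : r^n ≤ r^m := pow_le_pow_of_le_one hrpos.le (le_trans hrq hq1.le) hmn.le
    have hrqm : r^m ≤ q^m := pow_le_pow_left₀ hrpos.le hrq m
    have hqm0 : (0:ℝ) ≤ q^m := pow_nonneg hqpos.le m
    have hrn0 : (0:ℝ) ≤ r^n := pow_nonneg hrpos.le n
    have hKqn0 : (0:ℝ) ≤ K*q^n := mul_nonneg (by linarith) (pow_nonneg hqpos.le n)
    have hKmono : K*q^n ≤ K*q^m := mul_le_mul_of_nonneg_left hqnm (by linarith)
    have hD : |(K - K*q^m + 2*r^m) - (K - K*q^n + 2*r^n)| ≤ (K+2)*q^m := by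
      rw [abs_le]
      constructor <;> nlinarith
    have hGG : G1^2 ≤ (K - K*q^n + 2*r^n) * (K - K*q^m + 2*r^m) := by
      rw [pow_two]
      exact mul_le_mul hGFn hGFm (by linarith) (by linarith)
    have hterm : ∀ l : ℕ, l < m →
        |gibbs α β n (Bset (n - l)) - gibbs α β m (Bset (m - l))|
          ≤ q^l * ((K+2)*q^m/G1^2) := by
      intro l hlm
      rw [hg (lt_trans hlm hmn), hg hlm]
      rw [div_sub_div _ _ hFn0 hFm0, abs_div,
        abs_of_pos (mul_pos (by linarith : (0:ℝ) < K - K*q^n + 2*r^n)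
          (by linarith : (0:ℝ) < K - K*q^m + 2*r^m))]
      have hnum : |q^l*(K - K*q^m + 2*r^m) - (K - K*q^n + 2*r^n)*q^l|
          = q^l * |(K - K*q^m + 2*r^m) - (K - K*q^n + 2*r^n)| := by
        rw [show q^l*(K - K*q^m + 2*r^m) - (K - K*q^n + 2*r^n)*q^l
            = q^l*((K - K*q^m + 2*r^m) - (K - K*q^n + 2*r^n)) by ring,
          abs_mul, abs_of_nonneg (pow_nonneg hqpos.le l)]
      rw [hnum, mul_div_assoc]
      apply mul_le_mul_of_nonneg_left _ (pow_nonneg hqpos.le l)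
      exact div_le_div₀ (mul_nonneg (by linarith) hqm0) hD (by positivity) hGG
    have hXnn : (0:ℝ) ≤ K*((K+2)*q^m/G1^2) := by
      apply mul_nonneg (by linarith)
      apply div_nonneg (mul_nonneg (by linarith) hqm0) (by positivity)
    calc ∑ l ∈ Finset.range L,
          |gibbs α β n (Bset (n - l)) - gibbs α β m (Bset (m - l))|
        ≤ ∑ l ∈ Finset.range L, q^l * ((K+2)*q^m/G1^2) := by
          apply Finset.sum_le_sum
          intro l hl
          exact hterm l (by have := Finset.mem_range.1 hl; omega)
      _ = (∑ l ∈ Finset.range L, q^l) * ((K+2)*q^m/G1^2) := by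
          rw [← Finset.sum_mul]
      _ ≤ K * ((K+2)*q^m/G1^2) := by
          apply mul_le_mul_of_nonneg_right (hgeom L)
          apply div_nonneg (mul_nonneg (by linarith) hqm0) (by positivity)
      _ ≤ 2*(K1+2)/G1^2*K1*q^m := by
          rw [hK1]
          have heq : 2*(K+2)/G1^2*K*q^m = 2*(K*((K+2)*q^m/G1^2)) := by ring
          rw [heq]
          linarith
  constructor
  · -- part 1
    intro ε hε
    have hC : (0:ℝ) < 2*(K1+2)/G1^2*K1 := by
      rw [hK1]
      apply mul_pos (div_pos (by linarith) (by positivity)) (by linarith)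
    obtain ⟨N, hN⟩ := exists_pow_lt_of_lt_one (div_pos hε hC) hq1
    refine ⟨N, fun n m L hn hm hL1 hLmin => ?_⟩
    have hfin : ∀ j : ℕ, N < j → 2*(K1+2)/G1^2*K1*q^j < ε := by
      intro j hj
      have h1 : q^j ≤ q^N := pow_le_pow_of_le_one hqpos.le hq1.le hj.le
      have h2 : 2*(K1+2)/G1^2*K1*q^N < ε := by
        have h3 := (lt_div_iff₀ hC).1 hN
        linarith [h3, mul_comm (q^N) (2*(K1+2)/G1^2*K1)]
      have h4 : 2*(K1+2)/G1^2*K1*q^j ≤ 2*(K1+2)/G1^2*K1*q^N :=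
        mul_le_mul_of_nonneg_left h1 hC.le
      linarith
    rcases lt_trichotomy n m with h | h | h
    · have heq : ∑ l ∈ Finset.range L,
          |gibbs α β n (Bset (n - l)) - gibbs α β m (Bset (m - l))|
          = ∑ l ∈ Finset.range L,
          |gibbs α β m (Bset (m - l)) - gibbs α β n (Bset (n - l))| := by
        apply Finset.sum_congr rfl
        intro l _
        exact abs_sub_comm _ _
      rw [heq]
      exact lt_of_le_of_lt (main m n L h hL1 (le_trans hLmin (min_le_left n m))) (hfin n hn)
    · subst h
      have heq : ∑ l ∈ Finset.range L,
          |gibbs α β n (Bset (n - l)) - gibbs α β n (Bset (n - l))| = 0 := by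
        apply Finset.sum_eq_zero
        intro l _
        rw [sub_self, abs_zero]
      rw [heq]
      exact hε
    · exact lt_of_le_of_lt (main n m L h hL1 (le_trans hLmin (min_le_right n m))) (hfin m hm)
  · -- part 2
    intro n m L hmn hL1 hLm
    have := main n m L hmn hL1 hLm
    calc ∑ l ∈ Finset.range L,
          |gibbs α β n (Bset (n - l)) - gibbs α β m (Bset (m - l))|
        ≤ 2*(K1+2)/G1^2*K1*q^m := this
      _ = 2*(K1+2)/G1^2*K1*Real.exp (-b*m) := by rw [hexp m]
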